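/- If the conflict graph of an MSC μ that is a concatenation of exchanges is strongly connected, then μ is a prime exchange (it cannot be written as a concatenation of two non-empty exchanges). -/

import Mathlib

/-- Send/receive actions of a communicating system. -/
inductive Act (P V : Type) where
  | send (p q : P) (m : V)
  | recv (p q : P) (m : V)
deriving DecidableEq

namespace Act
variable {P V : Type}

/-- The process performing the action: `p` for a send `s^{p -> q}`, `q` for a receive. -/
def proc : Act P V → P
  | send p _ _ => p
  | recv _ q _ => q

def sender : Act P V → P
  | send p _ _ => p
  | recv p _ _ => p

def receiver : Act P V → P
  | send _ q _ => q
  | recv _ q _ => q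

def isSend : Act P V → Bool
  | send _ _ _ => true
  | recv _ _ _ => false

def isRecv : Act P V → Bool
  | send _ _ _ => false
  | recv _ _ _ => true

end Act
/-- A message sequence chart, given by a canonical linearization of its events
(`lab i` is the action of the `i`-th event) together with the matching relation `src`
between send events and receive events.  The process order `po` and the partial order
`(po ∪ src)^*` are derived from this data. -/
structure MSC (P V : Type) where
  n : ℕ
  lab : Fin n → Act P V
  src : Fin n → Fin n → Prop

namespace MSC
variable {P V : Type}

/-- Well-formedness: `src` goes forward from sends to receives with the same labels,
it is the graph of a bijection between a subset of the sends and all the receives. -/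
def WF (μ : MSC P V) : Prop :=
  (∀ i j, μ.src i j → i < j ∧ ∃ p q m, μ.lab i = .send p q m ∧ μ.lab j = .recv p q m) ∧
  (∀ i i' j, μ.src i j → μ.src i' j → i = i') ∧
  (∀ i j j', μ.src i j → μ.src i j' → j = j') ∧
  (∀ j, (μ.lab j).isRecv → ∃ i, μ.src i j)

/-- Process order: two events of the same process, in order. -/
def po (μ : MSC P V) (i j : Fin μ.n) : Prop :=
  i < j ∧ (μ.lab i).proc = (μ.lab j).proc

/-- `σ` enumerates the events (event `i` sits at position `σ.symm i`) in a way compatible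
with the partial order `(po ∪ src)^*`, i.e. it is a linearization of the MSC. -/
def IsLin (μ : MSC P V) (σ : Fin μ.n ≃ Fin μ.n) : Prop :=
  ∀ i j, (μ.po i j ∨ μ.src i j) → σ.symm i < σ.symm j

/-- An exchange: an MSC admitting a linearization in `S* R*`
(all sends before all receives). -/
def IsExchange (μ : MSC P V) : Prop :=
  ∃ σ : Fin μ.n ≃ Fin μ.n, μ.IsLin σ ∧
    ∀ a b : Fin μ.n, a ≤ b → (μ.lab (σ b)).isSend → (μ.lab (σ a)).isSend

/-- The size of an exchange: its number of send events. -/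
def size (μ : MSC P V) : ℕ :=
  (Finset.univ.filter (fun i : Fin μ.n => (μ.lab i).isSend = true)).card

/-- A `k`-exchange: at most `k` sends followed by at most `k` receives. -/
def IsKExchange (k : ℕ) (μ : MSC P V) : Prop :=
  μ.IsExchange ∧ μ.size ≤ k ∧ μ.n - μ.size ≤ k

/-- Concatenation of MSCs: all events of `μ₁` come before all events of `μ₂`
(in particular all `p`-events of `μ₁` precede all `p`-events of `μ₂`),
and the matching is the union of the two matchings. -/
def concat (μ₁ μ₂ : MSC P V) : MSC P V where
  n := μ₁.n + μ₂.n
  lab i :=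
    if h : i.val < μ₁.n then μ₁.lab ⟨i.val, h⟩
    else μ₂.lab ⟨i.val - μ₁.n, by have := i.isLt; omega⟩
  src i j :=
    (∃ (hi : i.val < μ₁.n) (hj : j.val < μ₁.n), μ₁.src ⟨i.val, hi⟩ ⟨j.val, hj⟩) ∨
    (∃ (_ : μ₁.n ≤ i.val) (_ : μ₁.n ≤ j.val),
      μ₂.src ⟨i.val - μ₁.n, by have := i.isLt; omega⟩ ⟨j.val - μ₁.n, by have := j.isLt; omega⟩)

/-- The empty MSC. -/
def empty : MSC P V := ⟨0, fun i => i.elim0, fun _ _ => False⟩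

/-- Concatenation `μ₁ ⬝ μ₂ ⬝ ⋯ ⬝ μₙ` of a list of MSCs. -/
def concatList (l : List (MSC P V)) : MSC P V := l.foldr concat empty

/-- Isomorphism of MSCs (equality of MSCs, which are considered up to renaming of events). -/
def Equiv (μ ν : MSC P V) : Prop :=
  ∃ f : Fin μ.n ≃ Fin ν.n,
    (∀ i, ν.lab (f i) = μ.lab i) ∧
    (∀ i j, ν.po (f i) (f j) ↔ μ.po i j) ∧
    (∀ i j, ν.src (f i) (f j) ↔ μ.src i j)

/-- The two kinds of events of a message: its send event `S` and its receive event `R`. -/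
inductive SR | S | R

/-- `evAt X v e`: event `e` is the `X`-event of the message (send event) `v`. -/
def evAt (μ : MSC P V) : SR → Fin μ.n → Fin μ.n → Prop
  | .S, v, e => e = v ∧ (μ.lab v).isSend
  | .R, v, e => μ.src v e

/-- `XY`-edge of the conflict graph: the `X`-event of `v` and the `Y`-event of `v'` exist,
and the former precedes the latter in the process order. -/
def cgEdge (μ : MSC P V) (X Y : SR) (v v' : Fin μ.n) : Prop :=
  ∃ e e', μ.evAt X v e ∧ μ.evAt Y v' e' ∧ μ.po e e'

/-- Edge of the conflict graph (for some labels `X Y`). -/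
def cg (μ : MSC P V) (v v' : Fin μ.n) : Prop := ∃ X Y, μ.cgEdge X Y v v'

/-- Two messages lie in the same strongly connected component of the conflict graph. -/
def SameSCC (μ : MSC P V) (v v' : Fin μ.n) : Prop :=
  Relation.ReflTransGen μ.cg v v' ∧ Relation.ReflTransGen μ.cg v' v

/-- A prime exchange: an exchange not decomposable as the concatenation of
two non-empty exchanges. -/
def Prime (μ : MSC P V) : Prop :=
  μ.IsExchange ∧
  ¬ ∃ μ₁ μ₂ : MSC P V, μ₁.n ≠ 0 ∧ μ₂.n ≠ 0 ∧ μ₁.IsExchange ∧ μ₂.IsExchange ∧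
      μ.Equiv (μ₁.concat μ₂)

lemma equiv_trans {μ ν ρ : MSC P V} (h1 : μ.Equiv ν) (h2 : ν.Equiv ρ) : μ.Equiv ρ := by
  obtain ⟨f, hf1, hf2, hf3⟩ := h1
  obtain ⟨g, hg1, hg2, hg3⟩ := h2
  exact ⟨f.trans g, fun i => by simp [Equiv.trans_apply, hg1, hf1],
    fun i j => by simp [Equiv.trans_apply, hg2, hf2],
    fun i j => by simp [Equiv.trans_apply, hg3, hf3]⟩

lemma isExchange_of_equiv {μ ν : MSC P V} (h : μ.Equiv ν) (hν : ν.IsExchange) :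
    μ.IsExchange := by
  obtain ⟨f, hlab, hpo, hsrc⟩ := h
  obtain ⟨σ, hlin, hsend⟩ := hν
  have hn : μ.n = ν.n := by simpa using Fintype.card_congr f
  refine ⟨(finCongr hn.symm).symm.trans (σ.trans f.symm), ?_, ?_⟩
  · intro i j hij
    have h1 : ν.po (f i) (f j) ∨ ν.src (f i) (f j) := by
      rcases hij with h | h
      · exact Or.inl ((hpo i j).mpr h)
      · exact Or.inr ((hsrc i j).mpr h)
    have h2 := hlin (f i) (f j) h1
    simp only [Equiv.symm_trans_apply, Equiv.symm_symm, Equiv.trans_apply,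
      Equiv.symm_apply_apply, finCongr_apply, Fin.lt_def, Fin.coe_cast] at h2 ⊢
    exact h2
  · intro a b hab hs
    have key : ∀ z : Fin ν.n, μ.lab (f.symm z) = ν.lab z := by
      intro z
      rw [← hlab (f.symm z), Equiv.apply_symm_apply]
    simp only [Equiv.trans_apply, Equiv.symm_trans_apply, key] at hs ⊢
    refine hsend _ _ ?_ hs
    simp only [finCongr_symm, finCongr_apply, Fin.le_def, Fin.coe_cast]
    exact hab

lemma concat_zero_left (ν m : MSC P V) (h : ν.n = 0) : (ν.concat m).Equiv m := by
  have hn : (ν.concat m).n = m.n := by show ν.n + m.n = m.n; omega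
  have hl : ∀ k, m.lab (finCongr hn k) = (ν.concat m).lab k := by
    intro k
    show _ = if h' : k.val < ν.n then _ else _
    rw [dif_neg (by omega)]
    congr 1
    refine Fin.ext ?_
    simp only [finCongr_apply, Fin.coe_cast]
    omega
  refine ⟨finCongr hn, hl, ?_, ?_⟩
  · intro i j
    unfold po
    rw [hl i, hl j]
    simp only [Fin.lt_def, finCongr_apply, Fin.coe_cast]
  · intro i j
    show m.src _ _ ↔ (∃ _ _, _) ∨ (∃ _ _, _)
    constructor
    · intro hs
      refine Or.inr ⟨by omega, by omega, ?_⟩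
      convert hs using 2 <;> simp only [finCongr_apply, Fin.coe_cast] <;> omega
    · rintro (⟨hi, _, _⟩ | ⟨_, _, hs⟩)
      · omega
      · convert hs using 2 <;> simp only [finCongr_apply, Fin.coe_cast] <;> omega

lemma concat_zero_right (ν m : MSC P V) (h : m.n = 0) : (ν.concat m).Equiv ν := by
  have hn : (ν.concat m).n = ν.n := by show ν.n + m.n = ν.n; omega
  have hlt : ∀ k : Fin (ν.concat m).n, k.val < ν.n := fun k => by
    have := k.isLt; show k.val < ν.n
    have h2 : k.val < ν.n + m.n := this
    omega
  have hl : ∀ k, ν.lab (finCongr hn k) = (ν.concat m).lab k := by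
    intro k
    show _ = if h' : k.val < ν.n then _ else _
    rw [dif_pos (hlt k)]
    exact congrArg _ (Fin.ext rfl)
  refine ⟨finCongr hn, hl, ?_, ?_⟩
  · intro i j
    unfold po
    rw [hl i, hl j]
    simp only [Fin.lt_def, finCongr_apply, Fin.coe_cast]
  · intro i j
    show ν.src _ _ ↔ (∃ _ _, _) ∨ (∃ _ _, _)
    constructor
    · intro hs
      refine Or.inl ⟨hlt i, hlt j, ?_⟩
      convert hs using 2 <;> rfl
    · rintro (⟨hi, hj, hs⟩ | ⟨hi, _, _⟩)
      · convert hs using 2 <;> rfl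
      · have := hlt i; omega

lemma no_split (μ : MSC P V) (hwf : μ.WF)
    (hsc : ∀ v v' : Fin μ.n, (μ.lab v).isSend → (μ.lab v').isSend →
      Relation.ReflTransGen μ.cg v v')
    (ν₁ ν₂ : MSC P V) (h1 : ν₁.n ≠ 0) (h2 : ν₂.n ≠ 0)
    (heq : μ.Equiv (ν₁.concat ν₂)) : False := by
  set c := ν₁.concat ν₂ with hc
  obtain ⟨f, hlab, hpo, hsrc⟩ := heq
  have hcn : c.n = ν₁.n + ν₂.n := rfl
  have hlab' : ∀ a : Fin c.n, c.lab a = μ.lab (f.symm a) := by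
    intro a
    rw [← hlab (f.symm a), Equiv.apply_symm_apply]
  -- src facts in c
  have hsrc' : ∀ a b : Fin c.n, c.src a b → μ.src (f.symm a) (f.symm b) := by
    intro a b hab
    have := (hsrc (f.symm a) (f.symm b)).mp
    simp only [Equiv.apply_symm_apply] at this
    exact this hab
  have srcSend : ∀ a b : Fin c.n, c.src a b → (c.lab a).isSend := by
    intro a b hab
    obtain ⟨_, p, q, mm, hl, _⟩ := hwf.1 _ _ (hsrc' a b hab)
    rw [hlab', hl]; rfl
  have recvHasSrc : ∀ b : Fin c.n, (c.lab b).isRecv → ∃ a, c.src a b := by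
    intro b hb
    rw [hlab'] at hb
    obtain ⟨i, hi⟩ := hwf.2.2.2 _ hb
    refine ⟨f i, ?_⟩
    have := (hsrc i (f.symm b)).mpr hi
    simpa using this
  -- region facts for src
  have srcRegion2 : ∀ a b : Fin c.n, c.src a b → ν₁.n ≤ b.val → ν₁.n ≤ a.val := by
    intro a b hab hb
    rcases hab with ⟨_, hj, _⟩ | ⟨ha, _, _⟩
    · omega
    · exact ha
  have srcRegion1 : ∀ a b : Fin c.n, c.src a b → b.val < ν₁.n → a.val < ν₁.n := by
    intro a b hab hb
    rcases hab with ⟨hi, _, _⟩ | ⟨_, hj, _⟩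
    · exact hi
    · omega
  -- a send in region 2
  have send2 : ∃ a : Fin c.n, ν₁.n ≤ a.val ∧ (c.lab a).isSend := by
    have hj : ν₁.n < c.n := by rw [hcn]; omega
    set j : Fin c.n := ⟨ν₁.n, hj⟩ with hjdef
    rcases hl : c.lab j with p | p
    · exact ⟨j, le_refl _, by rw [hl]; rfl⟩
    · obtain ⟨a, ha⟩ := recvHasSrc j (by rw [hl]; rfl)
      exact ⟨a, srcRegion2 a j ha (le_refl _), srcSend a j ha⟩
  -- a send in region 1
  have send1 : ∃ a : Fin c.n, a.val < ν₁.n ∧ (c.lab a).isSend := by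
    have hj : 0 < c.n := by rw [hcn]; omega
    set j : Fin c.n := ⟨0, hj⟩ with hjdef
    have hjv : j.val < ν₁.n := by simp [hjdef]; omega
    rcases hl : c.lab j with p | p
    · exact ⟨j, hjv, by rw [hl]; rfl⟩
    · obtain ⟨a, ha⟩ := recvHasSrc j (by rw [hl]; rfl)
      exact ⟨a, srcRegion1 a j ha hjv, srcSend a j ha⟩
  -- cg edges in c are monotone w.r.t. regions
  have mono : ∀ a b : Fin c.n, c.cg a b → ν₁.n ≤ a.val → ν₁.n ≤ b.val := by
    rintro a b ⟨X, Y, e, e', hX, hY, hpoe⟩ ha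
    have he : ν₁.n ≤ e.val := by
      cases X with
      | S => rw [hX.1]; exact ha
      | R =>
        rcases hX with ⟨hi, _, _⟩ | ⟨_, hj, _⟩
        · omega
        · exact hj
    have he' : ν₁.n ≤ e'.val := by
      have : e < e' := hpoe.1
      have : e.val < e'.val := this
      omega
    cases Y with
    | S => rw [← hY.1]; exact he'
    | R =>
      rcases hY with ⟨hi, _, _⟩ | ⟨ha', _, _⟩
      · omega
      · exact ha'
  -- transfer cg edges from μ to c
  have cgTrans : ∀ v v' : Fin μ.n, μ.cg v v' → c.cg (f v) (f v') := by
    rintro v v' ⟨X, Y, e, e', hX, hY, hp⟩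
    refine ⟨X, Y, f e, f e', ?_, ?_, (hpo e e').mpr hp⟩
    · cases X with
      | S => exact ⟨by rw [hX.1], by rw [hlab]; exact hX.2⟩
      | R => exact (hsrc v e).mpr hX
    · cases Y with
      | S => exact ⟨by rw [hY.1], by rw [hlab]; exact hY.2⟩
      | R => exact (hsrc v' e').mpr hY
  -- monotonicity along reflexive-transitive closure
  have rtgMono : ∀ v v' : Fin μ.n, Relation.ReflTransGen μ.cg v v' →
      ν₁.n ≤ (f v).val → ν₁.n ≤ (f v').val := by
    intro v v' h hv
    induction h with
    | refl => exact hv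
    | tail _ hedge ih => exact mono _ _ (cgTrans _ _ hedge) ih
  obtain ⟨a₂, ha₂, hs₂⟩ := send2
  obtain ⟨a₁, ha₁, hs₁⟩ := send1
  have hw₂ : (μ.lab (f.symm a₂)).isSend := by rw [← hlab'] ; exact hs₂
  have hw₁ : (μ.lab (f.symm a₁)).isSend := by rw [← hlab'] ; exact hs₁
  have := rtgMono _ _ (hsc (f.symm a₂) (f.symm a₁) hw₂ hw₁)
    (by rw [Equiv.apply_symm_apply]; exact ha₂)
  rw [Equiv.apply_symm_apply] at this
  omega

lemma exchange_of_list (μ : MSC P V) (hwf : μ.WF)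
    (hsc : ∀ v v' : Fin μ.n, (μ.lab v).isSend → (μ.lab v').isSend →
      Relation.ReflTransGen μ.cg v v') :
    ∀ l : List (MSC P V), (∀ ν ∈ l, ν.IsExchange) → μ.Equiv (concatList l) →
      μ.IsExchange := by
  intro l
  induction l with
  | nil =>
    intro _ heq
    obtain ⟨f, _, _, _⟩ := heq
    have hn : μ.n = 0 := Fin.equiv_iff_eq.mp ⟨f⟩
    refine ⟨Equiv.refl _, ?_, ?_⟩
    · intro i; exact absurd i.isLt (by omega)
    · intro a; exact absurd a.isLt (by omega)
  | cons ν l' ih =>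
    intro hall heq
    have heq' : μ.Equiv (ν.concat (concatList l')) := heq
    by_cases hν : ν.n = 0
    · exact ih (fun x hx => hall x (List.mem_cons_of_mem _ hx))
        (equiv_trans heq' (concat_zero_left ν (concatList l') hν))
    · by_cases hr : (concatList l').n = 0
      · exact isExchange_of_equiv
          (equiv_trans heq' (concat_zero_right ν (concatList l') hr))
          (hall ν List.mem_cons_self)
      · exact absurd (no_split μ hwf hsc ν (concatList l') hν hr heq') (fun h => h)

end MSC
/-- If the conflict graph of an MSC `μ` that is a concatenation of
exchanges is strongly connected, then `μ` is a prime exchange. -/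
theorem stmt1 {P V : Type} (μ : MSC P V) (hwf : μ.WF)
    (hdec : ∃ l : List (MSC P V), (∀ ν ∈ l, MSC.WF ν ∧ MSC.IsExchange ν) ∧
      μ.Equiv (MSC.concatList l))
    (hsc : ∀ v v' : Fin μ.n, (μ.lab v).isSend → (μ.lab v').isSend →
      Relation.ReflTransGen μ.cg v v') :
    MSC.Prime μ := by
  obtain ⟨l, hl, heq⟩ := hdec
  constructor
  · exact MSC.exchange_of_list μ hwf hsc l (fun ν hν => (hl ν hν).2) heq
  · rintro ⟨μ₁, μ₂, h1, h2, _, _, heq'⟩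
    exact MSC.no_split μ hwf hsc μ₁ μ₂ h1 h2 heq'
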